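/- Let Z₁ and Z₂ be 𝒢-complexes over 𝔽 = ℤ/2ℤ with fundamental classes f₁ of degree t₁ and f₂ of degree t₂, and let B₁, B₂ ≥ 0 be integers. Suppose that for ℓ = 1, 2 there are elements x^ℓ_i ∈ (Z_ℓ)_i, for each integer i with t_ℓ+1 ≤ i ≤ t_ℓ+4B_ℓ−2 and i ≢ t_ℓ+3 (mod 4), satisfying: ∂x^ℓ_{t_ℓ+1} = f_ℓ; ∂x^ℓ_{t_ℓ+2} = (1+j)x^ℓ_{t_ℓ+1}; ∂x^ℓ_i = s(1+j+j²+j³)x^ℓ_{i−2} when i ≡ t_ℓ (mod 4); ∂x^ℓ_i = (1+j)x^ℓ_{i−1} when i ≡ t_ℓ+1 (mod 4) and i > t_ℓ+1; and ∂x^ℓ_i = (1+j)x^ℓ_{i−1} + s·x^ℓ_{i−2} when i ≡ t_ℓ+2 (mod 4) and i > t_ℓ+2. Then, setting t = t₁+t₂ and A = B₁+B₂, there exist elements χ_i ∈ (Z₁ ⊗_𝔽 Z₂)_i, for each integer i with t+1 ≤ i ≤ t+4A−3 and i ≢ t+2 (mod 4), satisfying: ∂χ_{t+1} = f₁ ⊗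 f₂; ∂χ_i = s(1+j+j²+j³)χ_{i−2} when i ≡ t+3 (mod 4); ∂χ_i = (1+j)χ_{i−1} when i ≡ t (mod 4); and ∂χ_i = (1+j)χ_{i−1} + s·χ_{i−2} when i ≡ t+1 (mod 4) and i > t+1. -/
import Mathlib



open scoped TensorProduct

/-- A `𝒢`-complex over `𝔽 = ℤ/2ℤ`: a `ℤ`-graded `𝔽`-vector space `M = ⊕ᵢ Mᵢ` with
`𝔽`-linear maps `∂` (degree `-1`), `j` (degree `0`), `s` (degree `+1`) satisfying
`∂² = 0`, `j⁴ = id`, `s² = 0`, `s∘j = j³∘s`, `∂∘j = j∘∂` and `∂(sz) = s(∂z) + (1+j²)z`. -/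
structure GComplexOn (M : Type*) [AddCommGroup M] [Module (ZMod 2) M] where
  grading : ℤ → Submodule (ZMod 2) M
  isInternal : DirectSum.IsInternal grading
  d : M →ₗ[ZMod 2] M
  j : M →ₗ[ZMod 2] M
  s : M →ₗ[ZMod 2] M
  d_mem : ∀ (i : ℤ), ∀ x ∈ grading i, d x ∈ grading (i - 1)
  j_mem : ∀ (i : ℤ), ∀ x ∈ grading i, j x ∈ grading i
  s_mem : ∀ (i : ℤ), ∀ x ∈ grading i, s x ∈ grading (i + 1)
  d_sq : ∀ x, d (d x) = 0
  j_four : ∀ x, j (j (j (j x))) = x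
  s_sq : ∀ x, s (s x) = 0
  s_j : ∀ x, s (j x) = j (j (j (s x)))
  d_j : ∀ x, d (j x) = j (d x)
  d_s : ∀ x, d (s x) = s (d x) + x + j (j x)

/-- A fundamental class of degree `t`: a nonzero cycle in degree `t`, fixed by `j` and
killed by `s`. -/
def IsFundClass {M : Type*} [AddCommGroup M] [Module (ZMod 2) M]
    (Z : GComplexOn M) (t : ℤ) (f : M) : Prop :=
  f ≠ 0 ∧ f ∈ Z.grading t ∧ Z.d f = 0 ∧ Z.j f = f ∧ Z.s f = 0

/-- The `n`-th graded piece `(Z₁ ⊗ Z₂)ₙ = ⊕_{i+k=n} (Z₁)ᵢ ⊗ (Z₂)_k` of the tensor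
product of graded modules. -/
noncomputable def tensorGrading {M₁ M₂ : Type*} [AddCommGroup M₁] [Module (ZMod 2) M₁]
    [AddCommGroup M₂] [Module (ZMod 2) M₂]
    (g₁ : ℤ → Submodule (ZMod 2) M₁) (g₂ : ℤ → Submodule (ZMod 2) M₂) (n : ℤ) :
    Submodule (ZMod 2) (M₁ ⊗[ZMod 2] M₂) :=
  ⨆ i : ℤ, Submodule.span (ZMod 2)
    {z | ∃ a ∈ g₁ i, ∃ b ∈ g₂ (n - i), z = a ⊗ₜ[ZMod 2] b}

/-- The differential `∂(a⊗b) = ∂a⊗b + a⊗∂b` on the tensor product. -/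
noncomputable def tensorD {M₁ M₂ : Type*} [AddCommGroup M₁] [Module (ZMod 2) M₁]
    [AddCommGroup M₂] [Module (ZMod 2) M₂]
    (d₁ : M₁ →ₗ[ZMod 2] M₁) (d₂ : M₂ →ₗ[ZMod 2] M₂) :
    M₁ ⊗[ZMod 2] M₂ →ₗ[ZMod 2] M₁ ⊗[ZMod 2] M₂ :=
  TensorProduct.map d₁ LinearMap.id + TensorProduct.map LinearMap.id d₂

/-- The map `j(a⊗b) = ja ⊗ jb` on the tensor product. -/
noncomputable def tensorJ {M₁ M₂ : Type*} [AddCommGroup M₁] [Module (ZMod 2) M₁]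
    [AddCommGroup M₂] [Module (ZMod 2) M₂]
    (j₁ : M₁ →ₗ[ZMod 2] M₁) (j₂ : M₂ →ₗ[ZMod 2] M₂) :
    M₁ ⊗[ZMod 2] M₂ →ₗ[ZMod 2] M₁ ⊗[ZMod 2] M₂ :=
  TensorProduct.map j₁ j₂

/-- The map `s(a⊗b) = sa ⊗ b + j²a ⊗ sb` on the tensor product. -/
noncomputable def tensorS {M₁ M₂ : Type*} [AddCommGroup M₁] [Module (ZMod 2) M₁]
    [AddCommGroup M₂] [Module (ZMod 2) M₂]
    (j₁ s₁ : M₁ →ₗ[ZMod 2] M₁) (s₂ : M₂ →ₗ[ZMod 2] M₂) :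
    M₁ ⊗[ZMod 2] M₂ →ₗ[ZMod 2] M₁ ⊗[ZMod 2] M₂ :=
  TensorProduct.map s₁ LinearMap.id + TensorProduct.map (j₁ ∘ₗ j₁) s₂

/-- A tower of the kind computing the invariant `b` of a suspensionlike complex
(equation (3.3) of the paper): data `(g, d, j, s)` on `M`, a class `f` of degree `t`, and
elements `x i ∈ g i` for `t+1 ≤ i ≤ t+4B-2`, `i ≢ t+3 (mod 4)`, with the prescribed
differentials. -/
def TowerB {M : Type*} [AddCommGroup M] [Module (ZMod 2) M]
    (g : ℤ → Submodule (ZMod 2) M) (d j s : M →ₗ[ZMod 2] M)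
    (f : M) (t : ℤ) (B : ℕ) (x : ℤ → M) : Prop :=
  (∀ i : ℤ, t + 1 ≤ i → i ≤ t + 4*(B : ℤ) - 2 → i % 4 ≠ (t + 3) % 4 → x i ∈ g i) ∧
  (1 ≤ B → d (x (t + 1)) = f) ∧
  (1 ≤ B → d (x (t + 2)) = x (t + 1) + j (x (t + 1))) ∧
  (∀ i : ℤ, t + 1 ≤ i → i ≤ t + 4*(B : ℤ) - 2 → i % 4 = t % 4 →
    d (x i) = s (x (i - 2)) + s (j (x (i - 2))) + s (j (j (x (i - 2))))
      + s (j (j (j (x (i - 2)))))) ∧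
  (∀ i : ℤ, t + 1 < i → i ≤ t + 4*(B : ℤ) - 2 → i % 4 = (t + 1) % 4 →
    d (x i) = x (i - 1) + j (x (i - 1))) ∧
  (∀ i : ℤ, t + 2 < i → i ≤ t + 4*(B : ℤ) - 2 → i % 4 = (t + 2) % 4 →
    d (x i) = x (i - 1) + j (x (i - 1)) + s (x (i - 2)))

/-- A tower of the kind computing the invariant `a` of a suspensionlike complex
(equation (3.2) of the paper): elements `x i ∈ g i` for `t+1 ≤ i ≤ t+4A-3`,
`i ≢ t+2 (mod 4)`, with the prescribed differentials. -/
def TowerA {M : Type*} [AddCommGroup M] [Module (ZMod 2) M]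
    (g : ℤ → Submodule (ZMod 2) M) (d j s : M →ₗ[ZMod 2] M)
    (f : M) (t : ℤ) (A : ℕ) (x : ℤ → M) : Prop :=
  (∀ i : ℤ, t + 1 ≤ i → i ≤ t + 4*(A : ℤ) - 3 → i % 4 ≠ (t + 2) % 4 → x i ∈ g i) ∧
  (1 ≤ A → d (x (t + 1)) = f) ∧
  (∀ i : ℤ, t + 1 ≤ i → i ≤ t + 4*(A : ℤ) - 3 → i % 4 = (t + 3) % 4 →
    d (x i) = s (x (i - 2)) + s (j (x (i - 2))) + s (j (j (x (i - 2))))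
      + s (j (j (j (x (i - 2)))))) ∧
  (∀ i : ℤ, t + 1 ≤ i → i ≤ t + 4*(A : ℤ) - 3 → i % 4 = t % 4 →
    d (x i) = x (i - 1) + j (x (i - 1))) ∧
  (∀ i : ℤ, t + 1 < i → i ≤ t + 4*(A : ℤ) - 3 → i % 4 = (t + 1) % 4 →
    d (x i) = x (i - 1) + j (x (i - 1)) + s (x (i - 2)))

section Helpers

variable {M : Type*} [AddCommGroup M] [Module (ZMod 2) M]

lemma two_zsmul_zero {M : Type*} [AddCommGroup M] [Module (ZMod 2) M] (x : M) : (2:ℤ) • x = 0 := by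
  have h : ((2 : ZMod 2)) • x = ((2:ℤ) : ZMod 2) • x := by norm_num
  rw [show ((2:ℤ):ZMod 2) • x = (2:ℤ) • x from Int.cast_smul_eq_zsmul (ZMod 2) 2 x] at h
  rw [← h, show ((2:ZMod 2)) = 0 by decide, zero_smul]

lemma addself (x : M) : x + x = 0 := by
  have h : ((2 : ZMod 2)) • x = x + x := two_smul _ x
  rw [show ((2:ZMod 2)) = 0 by decide, zero_smul] at h
  exact h.symm

variable (Z : GComplexOn M)

/-- `Q' v = (1+j+j²+j³) v`. -/
def Qp (v : M) : M := v + Z.j v + Z.j (Z.j v) + Z.j (Z.j (Z.j v))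

/-- `P v = (1+j²) s v`. -/
def Pp (v : M) : M := Z.s v + Z.j (Z.j (Z.s v))

lemma s_j2 (v : M) : Z.s (Z.j (Z.j v)) = Z.j (Z.j (Z.s v)) := by
  rw [Z.s_j, Z.s_j, Z.j_four]

lemma s_j3 (v : M) : Z.s (Z.j (Z.j (Z.j v))) = Z.j (Z.s v) := by
  rw [Z.s_j, s_j2, Z.j_four]

lemma j_Qp (v : M) : Z.j (Qp Z v) = Qp Z v := by
  simp only [Qp, map_add, Z.j_four]; abel

lemma s_Qp (v : M) : Z.s (Qp Z v) = Qp Z (Z.s v) := by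
  simp only [Qp, map_add, Z.s_j, s_j2, s_j3, Z.j_four]; abel

lemma d_Qp (v : M) : Z.d (Qp Z v) = Qp Z (Z.d v) := by
  simp only [Qp, map_add, Z.d_j]

lemma Qp_add (v w : M) : Qp Z (v + w) = Qp Z v + Qp Z w := by
  simp only [Qp, map_add]; abel

lemma Qp_zero : Qp Z 0 = 0 := by simp [Qp]

lemma Qp_j (v : M) : Qp Z (Z.j v) = Qp Z v := by
  simp only [Qp, Z.j_four]; abel

lemma Qp_j2 (v : M) : Qp Z (Z.j (Z.j v)) = Qp Z v := by rw [Qp_j, Qp_j]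

lemma Qp_j3 (v : M) : Qp Z (Z.j (Z.j (Z.j v))) = Qp Z v := by rw [Qp_j, Qp_j, Qp_j]

lemma key1 (v : M) : Z.d (Qp Z (Z.s v)) = Qp Z (Z.s (Z.d v)) := by
  rw [d_Qp, Z.d_s, Qp_add, Qp_add, Qp_j2, add_assoc, addself, add_zero]

lemma key2 (v : M) : Qp Z (Z.s (v + Z.j v)) = 0 := by
  rw [map_add, Z.s_j, Qp_add, Qp_j3, addself]

lemma key3 (v : M) : Qp Z (Z.s (Z.s v)) = 0 := by
  rw [Z.s_sq, Qp_zero]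

/-- cond3 core: if `∂v = u + ju + sw` then `∂(P v) = Q'(s u)`. -/
lemma key4 (v u w : M) (hdv : Z.d v = u + Z.j u + Z.s w) :
    Z.d (Pp Z v) = Qp Z (Z.s u) := by
  simp only [Pp, map_add, Z.d_j, Z.d_s, hdv]
  simp only [map_add, Z.s_j, Z.s_sq, s_j2, s_j3, Z.j_four, map_zero, Qp]
  abel_nf
  simp only [two_zsmul_zero, add_zero, zero_add]

lemma key5 (v : M) : Pp Z v + Z.j (Pp Z v) = Qp Z (Z.s v) := by
  simp only [Pp, Qp, map_add]; abel

lemma key6 (v : M) : Z.s (Pp Z v) = 0 := by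
  simp only [Pp, map_add, Z.s_sq, s_j2, map_zero, add_zero, zero_add]

end Helpers
section Chains
variable {M : Type*} [AddCommGroup M] [Module (ZMod 2) M] (Z : GComplexOn M)
  {f : M} {t : ℤ} {B : ℕ} {x : ℤ → M}

lemma j2_Qp (v : M) : Z.j (Z.j (Qp Z v)) = Qp Z v := by rw [j_Qp, j_Qp]

lemma s_top (v : M) : Z.s (Qp Z (Z.s v)) = 0 := by rw [s_Qp]; exact key3 Z v

lemma Pp_mem {v : M} {i : ℤ} (h : v ∈ Z.grading i) : Pp Z v ∈ Z.grading (i + 1) :=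
  add_mem (Z.s_mem i v h) (Z.j_mem _ _ (Z.j_mem _ _ (Z.s_mem i v h)))

lemma Qp_mem {v : M} {i : ℤ} (h : v ∈ Z.grading i) : Qp Z v ∈ Z.grading i :=
  add_mem (add_mem (add_mem h (Z.j_mem _ _ h)) (Z.j_mem _ _ (Z.j_mem _ _ h)))
    (Z.j_mem _ _ (Z.j_mem _ _ (Z.j_mem _ _ h)))

lemma chain3 (h : TowerB Z.grading Z.d Z.j Z.s f t B x) (k : ℤ)
    (hk3 : k % 4 = 3) (hk1 : 3 ≤ k) (hk2 : k ≤ 4*(B:ℤ) - 1) :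
    Z.d (Pp Z (x (t + k - 1))) = Qp Z (Z.s (x (t + k - 2))) := by
  rcases eq_or_lt_of_le hk1 with hk | hk
  · have hB : 1 ≤ B := by omega
    rw [show t + k - 1 = t + 2 by omega, show t + k - 2 = t + 1 by omega]
    exact key4 Z _ _ 0 (by rw [map_zero, add_zero]; exact h.2.2.1 hB)
  · have hk7 : 7 ≤ k := by omega
    have hd := h.2.2.2.2.2 (t + k - 1) (by omega) (by omega) (by omega)
    rw [show t + k - 1 - 1 = t + k - 2 by ring, show t + k - 1 - 2 = t + k - 3 by ring] at hd
    exact key4 Z _ _ _ hd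

lemma chain4 (h : TowerB Z.grading Z.d Z.j Z.s f t B x) (k : ℤ)
    (hk0 : k % 4 = 0) (hk1 : 4 ≤ k) (hk2 : k ≤ 4*(B:ℤ) - 2) :
    Z.d (x (t + k)) = Pp Z (x (t + k - 2)) + Z.j (Pp Z (x (t + k - 2))) := by
  have hd := h.2.2.2.1 (t + k) (by omega) (by omega) (by omega)
  rw [hd, key5, ← s_Qp]
  simp only [Qp, map_add]

lemma chain5 (h : TowerB Z.grading Z.d Z.j Z.s f t B x) (k : ℤ)
    (hk1 : k % 4 = 1) (hk5 : 5 ≤ k) (hk2 : k ≤ 4*(B:ℤ) - 2) :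
    Z.d (x (t + k)) = x (t + k - 1) + Z.j (x (t + k - 1)) + Z.s (Pp Z (x (t + k - 3))) := by
  have hd := h.2.2.2.2.1 (t + k) (by omega) (by omega) (by omega)
  rw [key6, add_zero, hd]

lemma top_d (h : TowerB Z.grading Z.d Z.j Z.s f t B x) (hB : 1 ≤ B) :
    Z.d (Qp Z (Z.s (x (t + 4*(B:ℤ) - 2)))) = 0 := by
  rw [key1]
  rcases Nat.lt_or_ge B 2 with h2 | h2
  · have hB1 : B = 1 := by omega
    subst hB1
    rw [show t + 4*((1:ℕ):ℤ) - 2 = t + 2 by push_cast; ring, h.2.2.1 hB]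
    exact key2 Z _
  · have hd := h.2.2.2.2.2 (t + 4*(B:ℤ) - 2) (by omega) (by omega) (by omega)
    rw [hd, map_add, Qp_add, key2, key3, add_zero]

end Chains

section TensorHelp
variable {M₁ M₂ : Type*} [AddCommGroup M₁] [Module (ZMod 2) M₁]
  [AddCommGroup M₂] [Module (ZMod 2) M₂]

lemma tD_tmul (d₁ : M₁ →ₗ[ZMod 2] M₁) (d₂ : M₂ →ₗ[ZMod 2] M₂) (a : M₁) (b : M₂) :
    tensorD d₁ d₂ (a ⊗ₜ[ZMod 2] b) = d₁ a ⊗ₜ[ZMod 2] b + a ⊗ₜ[ZMod 2] d₂ b := by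
  simp [tensorD]

lemma tJ_tmul (j₁ : M₁ →ₗ[ZMod 2] M₁) (j₂ : M₂ →ₗ[ZMod 2] M₂) (a : M₁) (b : M₂) :
    tensorJ j₁ j₂ (a ⊗ₜ[ZMod 2] b) = j₁ a ⊗ₜ[ZMod 2] j₂ b := by
  simp [tensorJ]

lemma tS_tmul (j₁ s₁ : M₁ →ₗ[ZMod 2] M₁) (s₂ : M₂ →ₗ[ZMod 2] M₂) (a : M₁) (b : M₂) :
    tensorS j₁ s₁ s₂ (a ⊗ₜ[ZMod 2] b)
      = s₁ a ⊗ₜ[ZMod 2] b + j₁ (j₁ a) ⊗ₜ[ZMod 2] s₂ b := by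
  simp [tensorS]

lemma mem_tG {g₁ : ℤ → Submodule (ZMod 2) M₁} {g₂ : ℤ → Submodule (ZMod 2) M₂}
    {a : M₁} {b : M₂} {n i : ℤ} (h1 : a ∈ g₁ i) (h2 : b ∈ g₂ (n - i)) :
    a ⊗ₜ[ZMod 2] b ∈ tensorGrading g₁ g₂ n :=
  Submodule.mem_iSup_of_mem i (Submodule.subset_span ⟨a, h1, b, h2, rfl⟩)

end TensorHelp
section Chi
variable {M₁ M₂ : Type*} [AddCommGroup M₁] [Module (ZMod 2) M₁]
  [AddCommGroup M₂] [Module (ZMod 2) M₂]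

/-- The connected-sum tower: phase 1 (`k < 4B₁`) is the tower of `Z₁` tensored with `f₂`,
with correction `(1+j²)s x₁` in degrees `k ≡ 3 (4)`; phase 2 is
`(1+j+j²+j³)s x₁(top) ⊗ x₂`.  When `B₁ = 0` the whole tower is `f₁ ⊗ (Z₂-tower)`. -/
noncomputable def chi (Z₁ : GComplexOn M₁) (Z₂ : GComplexOn M₂) (t₁ t₂ : ℤ) (B₁ : ℕ)
    (f₁ : M₁) (f₂ : M₂) (x₁ : ℤ → M₁) (x₂ : ℤ → M₂) (i : ℤ) : M₁ ⊗[ZMod 2] M₂ :=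
  if B₁ = 0 then
    (if (i - (t₁ + t₂)) % 4 = 3 then f₁ ⊗ₜ[ZMod 2] Pp Z₂ (x₂ (t₂ + (i - (t₁ + t₂)) - 1))
     else f₁ ⊗ₜ[ZMod 2] x₂ (t₂ + (i - (t₁ + t₂))))
  else if i - (t₁ + t₂) < 4*(B₁:ℤ) then
    (if (i - (t₁ + t₂)) % 4 = 3 then Pp Z₁ (x₁ (t₁ + (i - (t₁ + t₂)) - 1)) ⊗ₜ[ZMod 2] f₂
     else x₁ (t₁ + (i - (t₁ + t₂))) ⊗ₜ[ZMod 2] f₂)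
  else Qp Z₁ (Z₁.s (x₁ (t₁ + 4*(B₁:ℤ) - 2))) ⊗ₜ[ZMod 2] x₂ (t₂ + (i - (t₁ + t₂)) - 4*(B₁:ℤ) + 1)

variable {Z₁ : GComplexOn M₁} {Z₂ : GComplexOn M₂} {t₁ t₂ : ℤ} {B₁ : ℕ}
  {f₁ : M₁} {f₂ : M₂} {x₁ : ℤ → M₁} {x₂ : ℤ → M₂}

lemma chi_A3 (m r : ℤ) (hr : r = t₂ + (m - (t₁ + t₂)) - 1)
    (h3 : (m - (t₁ + t₂)) % 4 = 3) (hB1 : B₁ = 0) :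
    chi Z₁ Z₂ t₁ t₂ B₁ f₁ f₂ x₁ x₂ m = f₁ ⊗ₜ[ZMod 2] Pp Z₂ (x₂ r) := by
  subst hr; unfold chi; rw [if_pos hB1, if_pos h3]

lemma chi_A (m r : ℤ) (hr : r = t₂ + (m - (t₁ + t₂)))
    (h3 : (m - (t₁ + t₂)) % 4 ≠ 3) (hB1 : B₁ = 0) :
    chi Z₁ Z₂ t₁ t₂ B₁ f₁ f₂ x₁ x₂ m = f₁ ⊗ₜ[ZMod 2] x₂ r := by
  subst hr; unfold chi; rw [if_pos hB1, if_neg h3]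

lemma chi_B3 (m r : ℤ) (hr : r = t₁ + (m - (t₁ + t₂)) - 1)
    (h3 : (m - (t₁ + t₂)) % 4 = 3) (hB1 : B₁ ≠ 0) (hlt : m - (t₁ + t₂) < 4*(B₁:ℤ)) :
    chi Z₁ Z₂ t₁ t₂ B₁ f₁ f₂ x₁ x₂ m = Pp Z₁ (x₁ r) ⊗ₜ[ZMod 2] f₂ := by
  subst hr; unfold chi; rw [if_neg hB1, if_pos hlt, if_pos h3]

lemma chi_B (m r : ℤ) (hr : r = t₁ + (m - (t₁ + t₂)))
    (h3 : (m - (t₁ + t₂)) % 4 ≠ 3) (hB1 : B₁ ≠ 0) (hlt : m - (t₁ + t₂) < 4*(B₁:ℤ)) :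
    chi Z₁ Z₂ t₁ t₂ B₁ f₁ f₂ x₁ x₂ m = x₁ r ⊗ₜ[ZMod 2] f₂ := by
  subst hr; unfold chi; rw [if_neg hB1, if_pos hlt, if_neg h3]

lemma chi_C (m r : ℤ) (hr : r = t₂ + (m - (t₁ + t₂)) - 4*(B₁:ℤ) + 1)
    (hB1 : B₁ ≠ 0) (hge : ¬ (m - (t₁ + t₂) < 4*(B₁:ℤ))) :
    chi Z₁ Z₂ t₁ t₂ B₁ f₁ f₂ x₁ x₂ m
      = Qp Z₁ (Z₁.s (x₁ (t₁ + 4*(B₁:ℤ) - 2))) ⊗ₜ[ZMod 2] x₂ r := by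
  subst hr; unfold chi; rw [if_neg hB1, if_neg hge]

end Chi
/-- given `b`-type towers of heights `B₁, B₂` over fundamental classes
`f₁, f₂` in 𝒢-complexes `Z₁, Z₂`, there is an `a`-type tower of height `B₁+B₂` over
`f₁ ⊗ f₂` in `Z₁ ⊗_𝔽 Z₂`. -/
theorem stmt_13 {M₁ M₂ : Type*} [AddCommGroup M₁] [Module (ZMod 2) M₁]
    [AddCommGroup M₂] [Module (ZMod 2) M₂]
    (Z₁ : GComplexOn M₁) (Z₂ : GComplexOn M₂) (t₁ t₂ : ℤ) (B₁ B₂ : ℕ)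
    (f₁ : M₁) (f₂ : M₂) (hf₁ : IsFundClass Z₁ t₁ f₁) (hf₂ : IsFundClass Z₂ t₂ f₂)
    (x₁ : ℤ → M₁) (x₂ : ℤ → M₂)
    (hx₁ : TowerB Z₁.grading Z₁.d Z₁.j Z₁.s f₁ t₁ B₁ x₁)
    (hx₂ : TowerB Z₂.grading Z₂.d Z₂.j Z₂.s f₂ t₂ B₂ x₂) :
    ∃ χ : ℤ → M₁ ⊗[ZMod 2] M₂,
      TowerA (tensorGrading Z₁.grading Z₂.grading) (tensorD Z₁.d Z₂.d)
        (tensorJ Z₁.j Z₂.j) (tensorS Z₁.j Z₁.s Z₂.s)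
        (f₁ ⊗ₜ[ZMod 2] f₂) (t₁ + t₂) (B₁ + B₂) χ := by
  classical
  obtain ⟨-, hf₁g, hf₁d, hf₁j, hf₁s⟩ := hf₁
  obtain ⟨-, hf₂g, hf₂d, hf₂j, hf₂s⟩ := hf₂
  have hjU : Z₁.j (Qp Z₁ (Z₁.s (x₁ (t₁ + 4*(B₁:ℤ) - 2))))
      = Qp Z₁ (Z₁.s (x₁ (t₁ + 4*(B₁:ℤ) - 2))) := j_Qp Z₁ _
  have hsU : Z₁.s (Qp Z₁ (Z₁.s (x₁ (t₁ + 4*(B₁:ℤ) - 2)))) = 0 := s_top Z₁ _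
  have hdU : 1 ≤ B₁ → Z₁.d (Qp Z₁ (Z₁.s (x₁ (t₁ + 4*(B₁:ℤ) - 2)))) = 0 :=
    fun h => top_d Z₁ hx₁ h
  refine ⟨chi Z₁ Z₂ t₁ t₂ B₁ f₁ f₂ x₁ x₂, ?_, ?_, ?_, ?_, ?_⟩
  · -- memberships
    intro i hi1 hi2 hi3
    have hk2 : (i - (t₁ + t₂)) % 4 ≠ 2 := by omega
    by_cases hB1 : B₁ = 0
    · by_cases h3 : (i - (t₁ + t₂)) % 4 = 3
      · rw [chi_A3 i (t₂ + (i - (t₁ + t₂)) - 1) (by ring) h3 hB1]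
        refine mem_tG (i := t₁) hf₁g ?_
        rw [show i - t₁ = (t₂ + (i - (t₁ + t₂)) - 1) + 1 by ring]
        exact Pp_mem Z₂ (hx₂.1 _ (by omega) (by omega) (by omega))
      · rw [chi_A i (t₂ + (i - (t₁ + t₂))) (by ring) h3 hB1]
        refine mem_tG (i := t₁) hf₁g ?_
        rw [show i - t₁ = t₂ + (i - (t₁ + t₂)) by ring]
        exact hx₂.1 _ (by omega) (by omega) (by omega)
    · by_cases hlt : i - (t₁ + t₂) < 4*(B₁:ℤ)
      · by_cases h3 : (i - (t₁ + t₂)) % 4 = 3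
        · rw [chi_B3 i (t₁ + (i - (t₁ + t₂)) - 1) (by ring) h3 hB1 hlt]
          refine mem_tG (i := (t₁ + (i - (t₁ + t₂)) - 1) + 1)
            (Pp_mem Z₁ (hx₁.1 _ (by omega) (by omega) (by omega))) ?_
          rw [show i - ((t₁ + (i - (t₁ + t₂)) - 1) + 1) = t₂ by ring]
          exact hf₂g
        · rw [chi_B i (t₁ + (i - (t₁ + t₂))) (by ring) h3 hB1 hlt]
          refine mem_tG (i := t₁ + (i - (t₁ + t₂)))
            (hx₁.1 _ (by omega) (by omega) (by omega)) ?_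
          rw [show i - (t₁ + (i - (t₁ + t₂))) = t₂ by ring]
          exact hf₂g
      · rw [chi_C i (t₂ + (i - (t₁ + t₂)) - 4*(B₁:ℤ) + 1) (by ring) hB1 hlt]
        refine mem_tG (i := (t₁ + 4*(B₁:ℤ) - 2) + 1)
          (Qp_mem Z₁ (Z₁.s_mem _ _ (hx₁.1 _ (by omega) (by omega) (by omega)))) ?_
        rw [show i - ((t₁ + 4*(B₁:ℤ) - 2) + 1) = t₂ + (i - (t₁ + t₂)) - 4*(B₁:ℤ) + 1 by ring]
        exact hx₂.1 _ (by omega) (by omega) (by omega)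
  · -- d χ(t+1) = f₁ ⊗ f₂
    intro hA
    by_cases hB1 : B₁ = 0
    · have hB2 : 1 ≤ B₂ := by omega
      rw [chi_A (t₁ + t₂ + 1) (t₂ + 1) (by ring) (by omega) hB1, tD_tmul, hf₁d,
        hx₂.2.1 hB2, TensorProduct.zero_tmul, zero_add]
    · have hB1' : 1 ≤ B₁ := Nat.one_le_iff_ne_zero.mpr hB1
      rw [chi_B (t₁ + t₂ + 1) (t₁ + 1) (by ring) (by omega) hB1 (by omega), tD_tmul,
        hx₁.2.1 hB1', hf₂d, TensorProduct.tmul_zero, add_zero]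
  · -- k ≡ 3 (mod 4)
    intro i hi1 hi2 hi3
    have hk3 : (i - (t₁ + t₂)) % 4 = 3 := by omega
    have hk1 : 3 ≤ i - (t₁ + t₂) := by omega
    by_cases hB1 : B₁ = 0
    · rw [chi_A3 i (t₂ + (i - (t₁ + t₂)) - 1) (by ring) hk3 hB1,
        chi_A (i - 2) (t₂ + (i - (t₁ + t₂)) - 2) (by ring) (by omega) hB1,
        tD_tmul, hf₁d, TensorProduct.zero_tmul, zero_add,
        chain3 Z₂ hx₂ (i - (t₁ + t₂)) hk3 hk1 (by omega)]
      simp only [tJ_tmul, tS_tmul, hf₁j, hf₁s, TensorProduct.zero_tmul, zero_add,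
        Qp, Z₂.s_j, Z₂.j_four, TensorProduct.tmul_add]
      abel
    · by_cases hlt : i - (t₁ + t₂) < 4*(B₁:ℤ)
      · rw [chi_B3 i (t₁ + (i - (t₁ + t₂)) - 1) (by ring) hk3 hB1 hlt,
          chi_B (i - 2) (t₁ + (i - (t₁ + t₂)) - 2) (by ring) (by omega) hB1 (by omega),
          tD_tmul, hf₂d, TensorProduct.tmul_zero, add_zero,
          chain3 Z₁ hx₁ (i - (t₁ + t₂)) hk3 hk1 (by omega)]
        simp only [tJ_tmul, tS_tmul, hf₂j, hf₂s, TensorProduct.tmul_zero, add_zero,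
          Qp, Z₁.s_j, Z₁.j_four, TensorProduct.add_tmul]
        abel
      · rw [chi_C i (t₂ + (i - (t₁ + t₂)) - 4*(B₁:ℤ) + 1) (by ring) hB1 hlt,
          chi_C (i - 2) (t₂ + (i - (t₁ + t₂)) - 4*(B₁:ℤ) - 1) (by ring) hB1 (by omega)]
        have hd := hx₂.2.2.2.1 (t₂ + (i - (t₁ + t₂)) - 4*(B₁:ℤ) + 1)
          (by omega) (by omega) (by omega)
        rw [show t₂ + (i - (t₁ + t₂)) - 4*(B₁:ℤ) + 1 - 2
            = t₂ + (i - (t₁ + t₂)) - 4*(B₁:ℤ) - 1 by ring] at hd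
        rw [tD_tmul, hdU (by omega), TensorProduct.zero_tmul, zero_add, hd,
          TensorProduct.tmul_add, TensorProduct.tmul_add, TensorProduct.tmul_add]
        simp only [tJ_tmul, tS_tmul, hjU, hsU, TensorProduct.zero_tmul, zero_add]
  · -- k ≡ 0 (mod 4)
    intro i hi1 hi2 hi3
    have hk0 : (i - (t₁ + t₂)) % 4 = 0 := by omega
    have hk4 : 4 ≤ i - (t₁ + t₂) := by omega
    by_cases hB1 : B₁ = 0
    · rw [chi_A i (t₂ + (i - (t₁ + t₂))) (by ring) (by omega) hB1,
        chi_A3 (i - 1) (t₂ + (i - (t₁ + t₂)) - 2) (by ring) (by omega) hB1,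
        tD_tmul, hf₁d, TensorProduct.zero_tmul, zero_add,
        chain4 Z₂ hx₂ (i - (t₁ + t₂)) hk0 hk4 (by omega)]
      simp only [tJ_tmul, hf₁j, TensorProduct.tmul_add]
    · by_cases hlt : i - (t₁ + t₂) < 4*(B₁:ℤ)
      · rw [chi_B i (t₁ + (i - (t₁ + t₂))) (by ring) (by omega) hB1 hlt,
          chi_B3 (i - 1) (t₁ + (i - (t₁ + t₂)) - 2) (by ring) (by omega) hB1 (by omega),
          tD_tmul, hf₂d, TensorProduct.tmul_zero, add_zero,
          chain4 Z₁ hx₁ (i - (t₁ + t₂)) hk0 hk4 (by omega)]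
        simp only [tJ_tmul, hf₂j, TensorProduct.add_tmul]
      · rcases eq_or_lt_of_le (show 4*(B₁:ℤ) ≤ i - (t₁ + t₂) by omega) with heq | hgt
        · -- transition k = 4B₁
          have hB2 : 1 ≤ B₂ := by omega
          rw [chi_C i (t₂ + (i - (t₁ + t₂)) - 4*(B₁:ℤ) + 1) (by ring) hB1 hlt,
            chi_B3 (i - 1) (t₁ + (i - (t₁ + t₂)) - 2) (by ring) (by omega) hB1 (by omega),
            show t₂ + (i - (t₁ + t₂)) - 4*(B₁:ℤ) + 1 = t₂ + 1 by omega,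
            show t₁ + (i - (t₁ + t₂)) - 2 = t₁ + 4*(B₁:ℤ) - 2 by omega,
            tD_tmul, hdU (by omega), TensorProduct.zero_tmul, zero_add, hx₂.2.1 hB2]
          simp only [tJ_tmul, hf₂j]
          rw [← TensorProduct.add_tmul, key5]
        · -- k ≥ 4B₁ + 4
          rw [chi_C i (t₂ + (i - (t₁ + t₂)) - 4*(B₁:ℤ) + 1) (by ring) hB1 hlt,
            chi_C (i - 1) (t₂ + (i - (t₁ + t₂)) - 4*(B₁:ℤ)) (by ring) hB1 (by omega)]
          have hd := hx₂.2.2.2.2.1 (t₂ + (i - (t₁ + t₂)) - 4*(B₁:ℤ) + 1)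
            (by omega) (by omega) (by omega)
          rw [show t₂ + (i - (t₁ + t₂)) - 4*(B₁:ℤ) + 1 - 1
              = t₂ + (i - (t₁ + t₂)) - 4*(B₁:ℤ) by ring] at hd
          rw [tD_tmul, hdU (by omega), TensorProduct.zero_tmul, zero_add, hd,
            TensorProduct.tmul_add]
          simp only [tJ_tmul, hjU]
  · -- k ≡ 1 (mod 4)
    intro i hi1 hi2 hi3
    have hk1 : (i - (t₁ + t₂)) % 4 = 1 := by omega
    have hk5 : 5 ≤ i - (t₁ + t₂) := by omega
    by_cases hB1 : B₁ = 0
    · rw [chi_A i (t₂ + (i - (t₁ + t₂))) (by ring) (by omega) hB1,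
        chi_A (i - 1) (t₂ + (i - (t₁ + t₂)) - 1) (by ring) (by omega) hB1,
        chi_A3 (i - 2) (t₂ + (i - (t₁ + t₂)) - 3) (by ring) (by omega) hB1,
        tD_tmul, hf₁d, TensorProduct.zero_tmul, zero_add,
        chain5 Z₂ hx₂ (i - (t₁ + t₂)) hk1 hk5 (by omega)]
      simp only [tJ_tmul, tS_tmul, hf₁j, hf₁s, TensorProduct.zero_tmul, zero_add,
        TensorProduct.tmul_add]
    · by_cases hlt : i - (t₁ + t₂) < 4*(B₁:ℤ)
      · rw [chi_B i (t₁ + (i - (t₁ + t₂))) (by ring) (by omega) hB1 hlt,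
          chi_B (i - 1) (t₁ + (i - (t₁ + t₂)) - 1) (by ring) (by omega) hB1 (by omega),
          chi_B3 (i - 2) (t₁ + (i - (t₁ + t₂)) - 3) (by ring) (by omega) hB1 (by omega),
          tD_tmul, hf₂d, TensorProduct.tmul_zero, add_zero,
          chain5 Z₁ hx₁ (i - (t₁ + t₂)) hk1 hk5 (by omega)]
        simp only [tJ_tmul, tS_tmul, hf₂j, hf₂s, TensorProduct.tmul_zero, add_zero,
          TensorProduct.add_tmul]
      · rcases eq_or_lt_of_le (show 4*(B₁:ℤ) + 1 ≤ i - (t₁ + t₂) by omega) with heq | hgt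
        · -- transition k = 4B₁ + 1
          have hB2 : 1 ≤ B₂ := by omega
          rw [chi_C i (t₂ + (i - (t₁ + t₂)) - 4*(B₁:ℤ) + 1) (by ring) hB1 hlt,
            chi_C (i - 1) (t₂ + (i - (t₁ + t₂)) - 4*(B₁:ℤ)) (by ring) hB1 (by omega),
            chi_B3 (i - 2) (t₁ + (i - (t₁ + t₂)) - 3) (by ring) (by omega) hB1 (by omega),
            show t₂ + (i - (t₁ + t₂)) - 4*(B₁:ℤ) + 1 = t₂ + 2 by omega,
            show t₂ + (i - (t₁ + t₂)) - 4*(B₁:ℤ) = t₂ + 1 by omega,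
            tD_tmul, hdU (by omega), TensorProduct.zero_tmul, zero_add, hx₂.2.2.1 hB2,
            TensorProduct.tmul_add]
          simp only [tJ_tmul, tS_tmul, hjU, key6, hf₂s, TensorProduct.zero_tmul,
            TensorProduct.tmul_zero, add_zero, zero_add]
        · -- k ≥ 4B₁ + 5
          rw [chi_C i (t₂ + (i - (t₁ + t₂)) - 4*(B₁:ℤ) + 1) (by ring) hB1 hlt,
            chi_C (i - 1) (t₂ + (i - (t₁ + t₂)) - 4*(B₁:ℤ)) (by ring) hB1 (by omega),
            chi_C (i - 2) (t₂ + (i - (t₁ + t₂)) - 4*(B₁:ℤ) - 1) (by ring) hB1 (by omega)]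
          have hd := hx₂.2.2.2.2.2 (t₂ + (i - (t₁ + t₂)) - 4*(B₁:ℤ) + 1)
            (by omega) (by omega) (by omega)
          rw [show t₂ + (i - (t₁ + t₂)) - 4*(B₁:ℤ) + 1 - 1
              = t₂ + (i - (t₁ + t₂)) - 4*(B₁:ℤ) by ring,
            show t₂ + (i - (t₁ + t₂)) - 4*(B₁:ℤ) + 1 - 2
              = t₂ + (i - (t₁ + t₂)) - 4*(B₁:ℤ) - 1 by ring] at hd
          rw [tD_tmul, hdU (by omega), TensorProduct.zero_tmul, zero_add, hd,
            TensorProduct.tmul_add, TensorProduct.tmul_add]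
          simp only [tJ_tmul, tS_tmul, hjU, hsU, TensorProduct.zero_tmul, zero_add]
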